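/- Let p ∈ ℕ be even with p ≥ 2, define F : ℝ^{p+2} → ℝ by F(x, y, t₁, …, t_p) = t_p + (max(y, 0))^{p+2}, and let u, v ∈ ℝ with v ≥ 0. If γ : ℝ → ℝ^{p+2} is differentiable with γ′(s) = u·X(γ(s)) + v·Y(γ(s)) for all s ∈ ℝ, then the function s ↦ F(γ(s)) is monotone nondecreasing on ℝ. (Consequently, the set E = {F ≥ 0} and its complement meet every horizontal line of the filiform group in a half-line or segment; i.e., both E and E^c are horizontally convex.) -/

import Mathlib

/-- The filiform horizontal vector field `X = ∂_x`, viewed as a map `ℝ^{p+2} → ℝ^{p+2}`: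
`X(a) = e₁`. -/
def filiformX (p : ℕ) : (Fin (p + 2) → ℝ) → (Fin (p + 2) → ℝ) :=
  fun _ i => if (i : ℕ) = 0 then 1 else 0

/-- The filiform horizontal vector field `Y = ∂_y + Σ_{k=1}^p (x^k/k!) ∂_{t_k}`, viewed
as a map `ℝ^{p+2} → ℝ^{p+2}`: `Y(a) = e₂ + Σ_{k=1}^p (a₁^k/k!) e_{2+k}`. -/
noncomputable def filiformY (p : ℕ) : (Fin (p + 2) → ℝ) → (Fin (p + 2) → ℝ) :=
  fun a i =>
    if (i : ℕ) = 0 then 0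
    else if (i : ℕ) = 1 then 1
    else (a 0) ^ ((i : ℕ) - 1) / (Nat.factorial ((i : ℕ) - 1) : ℝ)

/-- Let `p` be even, `p ≥ 2`, let
`F(x, y, t₁, …, t_p) = t_p + (max(y,0))^{p+2}`, and let `u, v ∈ ℝ` with `v ≥ 0`.  If
`γ : ℝ → ℝ^{p+2}` is an integral curve of the horizontal vector field `uX + vY`
(i.e. `γ′(s) = u·X(γ(s)) + v·Y(γ(s))` for all `s`), then `s ↦ F(γ(s))` is monotone
nondecreasing on `ℝ`. -/
theorem filiform_counterexample_monotone_along_horizontal_lines (p : ℕ)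
    (hpe : Even p) (hp : 2 ≤ p)
    (F : (Fin (p + 2) → ℝ) → ℝ)
    (hF : ∀ a, F a = a ⟨p + 1, by omega⟩ + max (a 1) 0 ^ (p + 2))
    (u v : ℝ) (hv : 0 ≤ v)
    (γ : ℝ → Fin (p + 2) → ℝ)
    (hγ : ∀ s : ℝ, HasDerivAt γ (u • filiformX p (γ s) + v • filiformY p (γ s)) s) :
    Monotone (fun s => F (γ s)) := by
  have hfac : (0:ℝ) < (Nat.factorial p : ℝ) := by positivity
  have h1v : ((1 : Fin (p+2)) : ℕ) = 1 := by
    simp [Fin.val_one]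
  -- coordinate 1 has derivative v
  have hd1 : ∀ s, HasDerivAt (fun s => γ s (1 : Fin (p+2))) v s := by
    intro s
    have h := (hasDerivAt_pi.mp (hγ s)) (1 : Fin (p+2))
    refine h.congr_deriv ?_
    simp [filiformX, filiformY, h1v]
  -- coordinate p+1 has nonneg derivative
  have hdp : ∀ s, HasDerivAt (fun s => γ s (⟨p+1, by omega⟩ : Fin (p+2)))
      (v * ((γ s 0) ^ p / (Nat.factorial p : ℝ))) s := by
    intro s
    have h := (hasDerivAt_pi.mp (hγ s)) (⟨p+1, by omega⟩ : Fin (p+2))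
    refine h.congr_deriv ?_
    simp only [Pi.add_apply, Pi.smul_apply, filiformX, filiformY]
    have h0 : p + 1 ≠ 0 := by omega
    have h1 : p + 1 ≠ 1 := by omega
    simp [h0, h1, show p ≠ 0 by omega]
  have m1 : Monotone (fun s => γ s (1 : Fin (p+2))) := by
    apply monotone_of_deriv_nonneg
    · exact fun s => (hd1 s).differentiableAt
    · intro s
      rw [(hd1 s).deriv]
      exact hv
  have mp : Monotone (fun s => γ s (⟨p+1, by omega⟩ : Fin (p+2))) := by
    apply monotone_of_deriv_nonneg
    · exact fun s => (hdp s).differentiableAt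
    · intro s
      rw [(hdp s).deriv]
      have : (0:ℝ) ≤ (γ s 0) ^ p := hpe.pow_nonneg _
      positivity
  intro a b hab
  simp only [hF]
  have h2 : max (γ a 1) 0 ^ (p+2) ≤ max (γ b 1) 0 ^ (p+2) := by
    apply pow_le_pow_left₀ (le_max_right _ _)
    exact max_le_max (m1 hab) le_rfl
  exact add_le_add (mp hab) h2
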